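/- Let J be a graded left coideal of a connected graded Hopf algebra H with graded filtration-ordered basis (x_i) of degrees |x_i|, and let Z₀ act on L(H,A) as f ↦ f∘Y. Define Ψ_J[Z₀] to be the diagonal matrix with entries |x_i|. Then the matrix commutator satisfies [Ψ_J[f], −Ψ_J[Z₀]] = Ψ_J[f ∘ Y]; concretely, ((|x_i| − |x_j|) f(M_{ij}))_{ij} = ((f∘Y)(M_{ij}))_{ij}, which holds because each coproduct matrix entry M_{ij} is homogeneous of degree |x_i| − |x_j|. -/

import Mathlib

open TensorProduct

/-- If `x` is a linearly independent family over a field and `∑ j, c j ⊗ x j = 0`,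
then each coefficient `c j = 0`. -/
lemma my_tmul_coeff_zero (k H : Type*) [Field k] [AddCommGroup H] [Module k H]
    (m : ℕ) (x : Fin m → H) (hind : LinearIndependent k x)
    (c : Fin m → H) (h : (∑ j, c j ⊗ₜ[k] x j) = 0) : ∀ j, c j = 0 := by
  intro j
  set ψ : Submodule.span k (Set.range x) →ₗ[k] k :=
    (Finsupp.lapply j) ∘ₗ (hind.repr : _ →ₗ[k] (Fin m →₀ k)) with hψ
  obtain ⟨φ, hφ⟩ := LinearMap.exists_extend ψ
  have hφx : ∀ j', φ (x j') = if j' = j then 1 else 0 := by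
    intro j'
    have hmem : x j' ∈ Submodule.span k (Set.range x) :=
      Submodule.subset_span ⟨j', rfl⟩
    have : φ (x j') = ψ ⟨x j', hmem⟩ := by
      rw [← hφ]; rfl
    rw [this, hψ]
    have := hind.repr_eq_single j' ⟨x j', hmem⟩ rfl
    simp [this, Finsupp.single_apply]
  have := congrArg ((TensorProduct.rid k H).toLinearMap ∘ₗ (φ.lTensor H)) h
  simp only [map_sum, LinearMap.comp_apply, LinearMap.lTensor_tmul,
    LinearEquiv.coe_coe, TensorProduct.rid_tmul, map_zero, hφx] at this
  simpa using this

theorem matrix_commutator_grading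
    (k H A : Type*) [Field k] [CharZero k] [CommRing H] [Bialgebra k H]
    [CommRing A] [Algebra k A]
    (ℱ : ℕ → Submodule k H)
    (hint : DirectSum.IsInternal ℱ)
    (hconn : ℱ 0 = Submodule.span k {1})
    (hΔgr : ∀ n : ℕ, ∀ z ∈ ℱ n, Coalgebra.comul (R := k) z ∈
      ⨆ (p : ℕ) (q : ℕ) (_ : p + q = n),
        LinearMap.range (TensorProduct.mapIncl (ℱ p) (ℱ q)))
    (Y : H →ₗ[k] H)
    (hY : ∀ n : ℕ, ∀ z ∈ ℱ n, Y z = (n : k) • z)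
    (m : ℕ) (x : Fin m → H)
    (hind : LinearIndependent k x)
    (d : Fin m → ℕ)
    (hdeg : ∀ i : Fin m, x i ∈ ℱ (d i))
    (horder : Monotone d)
    (M : Matrix (Fin m) (Fin m) H)
    (hM : ∀ i : Fin m, Coalgebra.comul (R := k) (x i) = ∑ j, M i j ⊗ₜ[k] x j) :
    (∀ i j : Fin m, Y (M i j) = (((d i : k) - (d j : k))) • M i j) ∧
    ∀ f : H →ₗ[k] A,
      (Matrix.diagonal fun i => algebraMap k A (d i : k)) *
          (Matrix.of fun i j => f (M i j)) -
        (Matrix.of fun i j => f (M i j)) *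
          (Matrix.diagonal fun i => algebraMap k A (d i : k))
      = Matrix.of fun i j => f (Y (M i j)) := by
  classical
  set e : DirectSum ℕ (fun n => ℱ n) ≃ₗ[k] H :=
    LinearEquiv.ofBijective (DirectSum.coeLinearMap ℱ) hint with he
  -- the projection onto the n-th graded piece
  set π : ℕ → (H →ₗ[k] H) := fun n =>
    (ℱ n).subtype ∘ₗ (DirectSum.component k ℕ (fun n => ℱ n) n) ∘ₗ
      (e.symm : H →ₗ[k] DirectSum ℕ (fun n => ℱ n)) with hπdef
  have hπ_mem : ∀ n z, π n z ∈ ℱ n := fun n z => Submodule.coe_mem _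
  have hπ_same : ∀ n z, z ∈ ℱ n → π n z = z := by
    intro n z hz
    simp only [hπdef, LinearMap.comp_apply, LinearEquiv.coe_coe, he]
    rw [DirectSum.component, DFinsupp.lapply]
    simp only [LinearMap.coe_mk, AddHom.coe_mk]
    rw [show (LinearEquiv.ofBijective (DirectSum.coeLinearMap ℱ) hint).symm z n
        = (⟨z, hz⟩ : ℱ n) from hint.ofBijective_coeLinearMap_of_mem hz]
    rfl
  have hπ_ne : ∀ n p z, z ∈ ℱ n → p ≠ n → π p z = 0 := by
    intro n p z hz hpn
    simp only [hπdef, LinearMap.comp_apply, LinearEquiv.coe_coe, he]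
    rw [DirectSum.component, DFinsupp.lapply]
    simp only [LinearMap.coe_mk, AddHom.coe_mk]
    rw [hint.ofBijective_coeLinearMap_of_mem_ne (Ne.symm hpn) hz]
    rfl
  -- if all projections except the n-th vanish, the element is π n of itself
  have hrecon : ∀ (n : ℕ) (z : H), (∀ p, p ≠ n → π p z = 0) → z = π n z := by
    intro n z hz
    set c := e.symm z n with hc
    have hez : e.symm z = DirectSum.of (fun p => ℱ p) n c := by
      apply DFinsupp.ext
      intro p
      by_cases hpn : p = n
      · subst hpn; rw [DirectSum.of_eq_same, hc]
      · rw [DirectSum.of_eq_of_ne _ _ _ hpn]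
        have := hz p hpn
        simp only [hπdef, LinearMap.comp_apply, LinearEquiv.coe_coe] at this
        exact Subtype.ext (by
          simpa [DirectSum.component, DFinsupp.lapply] using this)
    have hz' : z = (c : H) := by
      conv_lhs => rw [← e.apply_symm_apply z, hez]
      rw [he]; exact DirectSum.coeLinearMap_of ℱ n c
    rw [hz', hπ_same n _ c.2]
  -- key: projections of M i j vanish in wrong degrees
  have hproj : ∀ (i j : Fin m) (n : ℕ), n + d j ≠ d i → π n (M i j) = 0 := by
    intro i j n hn
    set T : H ⊗[k] H →ₗ[k] H ⊗[k] H := TensorProduct.map (π n) (π (d j)) with hT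
    have hT0 : T (Coalgebra.comul (R := k) (x i)) = 0 := by
      have hmem := hΔgr (d i) (x i) (hdeg i)
      have hker : (⨆ (p : ℕ) (q : ℕ) (_ : p + q = d i),
          LinearMap.range (TensorProduct.mapIncl (ℱ p) (ℱ q))) ≤ LinearMap.ker T := by
        refine iSup_le fun p => iSup_le fun q => iSup_le fun hpq => ?_
        rintro w ⟨w', rfl⟩
        have : T ∘ₗ TensorProduct.mapIncl (ℱ p) (ℱ q)
            = TensorProduct.map (π n ∘ₗ (ℱ p).subtype) (π (d j) ∘ₗ (ℱ q).subtype) :=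
          TensorProduct.ext' fun a b => rfl
        simp only [LinearMap.mem_ker, ← LinearMap.comp_apply, this]
        by_cases hpn : p = n
        · have hq : q ≠ d j := by
            intro hq; exact hn (by omega)
          have : π (d j) ∘ₗ (ℱ q).subtype = 0 := by
            ext ⟨z, hz⟩
            exact hπ_ne q (d j) z hz (fun h => hq h.symm)
          rw [this, TensorProduct.map_zero_right]
          rfl
        · have : π n ∘ₗ (ℱ p).subtype = 0 := by
            ext ⟨z, hz⟩
            exact hπ_ne p n z hz (fun h => hpn h.symm)
          rw [this, TensorProduct.map_zero_left]
          rfl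
      exact hker hmem
    rw [hM i, map_sum] at hT0
    have hT0' : (∑ j', (if d j' = d j then π n (M i j') else 0) ⊗ₜ[k] x j') = 0 := by
      rw [← hT0]
      refine Finset.sum_congr rfl fun j' _ => ?_
      rw [hT, TensorProduct.map_tmul]
      by_cases hdj : d j' = d j
      · rw [if_pos hdj, hπ_same (d j) (x j') (hdj ▸ hdeg j')]
      · rw [if_neg hdj, hπ_ne (d j') (d j) (x j') (hdeg j') (fun h => hdj h.symm),
          TensorProduct.tmul_zero, TensorProduct.zero_tmul]
    have := my_tmul_coeff_zero k H m x hind _ hT0' j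
    simpa using this
  have hYM : ∀ i j : Fin m, Y (M i j) = ((d i : k) - (d j : k)) • M i j := by
    intro i j
    rcases le_or_gt (d j) (d i) with hle | hlt
    · have hMmem : M i j = π (d i - d j) (M i j) := by
        refine hrecon _ _ fun p hp => hproj i j p fun hc => hp ?_
        omega
      have : M i j ∈ ℱ (d i - d j) := hMmem ▸ hπ_mem _ _
      rw [hY _ _ this]
      congr 1
      rw [Nat.cast_sub hle]
    · have hM0 : M i j = 0 := by
        have h0 : M i j = π 0 (M i j) :=
          hrecon 0 _ fun p hp => hproj i j p (by omega)
        rw [h0, hproj i j 0 (by omega)]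
      rw [hM0, map_zero, smul_zero]
  refine ⟨hYM, fun f => ?_⟩
  ext i j
  simp only [Matrix.sub_apply, Matrix.diagonal_mul, Matrix.mul_diagonal, Matrix.of_apply,
    hYM i j, map_smul, smul_eq_mul]
  rw [Algebra.smul_def, map_sub, sub_mul, mul_comm (f (M i j))]
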